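/- Suppose differentiable functions x₁, x₂, e₁, e₂, r, γ₃ of t satisfy ẋ₁ = -(i/2)(rx₁+γ₃), ẋ₂ = (i/2)(rx₂+γ₃), ė₁ = -ire₁, ė₂ = ire₂, ṙ = (i/2)(x₂-x₁+e₂-e₁), γ̇₃ = (i/2)(e₁x₂-e₂x₁). Then γ₃² - x₂²e₁ - x₁²e₂ is constant in t. -/

import Mathlib

open Complex in
theorem stmt_9 (x₁ x₂ e₁ e₂ r γ₃ : ℝ → ℂ)
    (hx₁ : ∀ t, HasDerivAt x₁ (-(I/2)*(r t * x₁ t + γ₃ t)) t)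
    (hx₂ : ∀ t, HasDerivAt x₂ ((I/2)*(r t * x₂ t + γ₃ t)) t)
    (he₁ : ∀ t, HasDerivAt e₁ (-I * r t * e₁ t) t)
    (he₂ : ∀ t, HasDerivAt e₂ (I * r t * e₂ t) t)
    (hr : ∀ t, HasDerivAt r ((I/2)*(x₂ t - x₁ t + e₂ t - e₁ t)) t)
    (hγ₃ : ∀ t, HasDerivAt γ₃ ((I/2)*(e₁ t * x₂ t - e₂ t * x₁ t)) t) :
    ∀ t, HasDerivAt (fun t => (γ₃ t)^2 - (x₂ t)^2 * e₁ t - (x₁ t)^2 * e₂ t) 0 t := by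
  intro t
  have h := ((((hγ₃ t).mul (hγ₃ t))).sub (((hx₂ t).mul (hx₂ t)).mul (he₁ t))).sub
    (((hx₁ t).mul (hx₁ t)).mul (he₂ t))
  have h' : HasDerivAt (fun t => (γ₃ t)^2 - (x₂ t)^2 * e₁ t - (x₁ t)^2 * e₂ t) 0 t := by
    have e : (fun t => (γ₃ t)^2 - (x₂ t)^2 * e₁ t - (x₁ t)^2 * e₂ t)
        = (γ₃ * γ₃ - x₂ * x₂ * e₁ - x₁ * x₁ * e₂) := by
      funext s; simp only [Pi.mul_apply, Pi.sub_apply]; ring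
    rw [e]
    exact h.congr_deriv (by simp only [Pi.mul_apply]; ring)
  exact h'
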